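/- Let V be a finite-dimensional vector space over a field of characteristic 0, and let X ∈ End(V) be diagonalizable with all eigenvalues in {-1/2, 0, 1/2}. Then ad(X) acting on End(V) by ad(X)(Y) = XY - YX is diagonalizable with all eigenvalues in {-1, -1/2, 0, 1/2, 1}. Conversely, if X ∈ 𝔰𝔭(V, Ω) for a symplectic form Ω, X acts irreducibly enough that ad(X) on 𝔰𝔭(V, Ω) has spectrum {-1, 0, 1} with X ≠ 0, then X is diagonalizable on V with spectrum {-1/2, 1/2}. -/

import Mathlib

section Helpers

variable {K : Type*} [Field K] [CharZero K] {W : Type*} [AddCommGroup W] [Module K W]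

private lemma eig_mem_of_cube (f : Module.End K W) (hf : ∀ w, f (f (f w)) = (1/4 : K) • f w)
    (v : W) :
    ((2:K) • f (f v) - f v) ∈ f.eigenspace (-(1:K)/2) ∧
    (v - (4:K) • f (f v)) ∈ f.eigenspace 0 ∧
    ((2:K) • f (f v) + f v) ∈ f.eigenspace (1/2) ∧
    v = ((2:K) • f (f v) - f v) + (v - (4:K) • f (f v)) + ((2:K) • f (f v) + f v) := by
  refine ⟨?_, ?_, ?_, by module⟩ <;> rw [Module.End.mem_eigenspace_iff] <;>
    simp only [map_sub, map_add, map_smul, hf v] <;> match_scalars <;> norm_num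

private lemma cube_of_sup3 (f : Module.End K W)
    (h : Module.End.eigenspace f (-(1:K)/2) ⊔ Module.End.eigenspace f 0 ⊔
      Module.End.eigenspace f (1/2) = ⊤) :
    f * f * f = (1/4 : K) • f := by
  have key : ⊤ ≤ LinearMap.ker (f * f * f - (1/4:K) • f) := by
    rw [← h]
    refine sup_le (sup_le ?_ ?_) ?_ <;> intro v hv <;>
      rw [Module.End.mem_eigenspace_iff] at hv <;>
      simp only [LinearMap.mem_ker, LinearMap.sub_apply, Module.End.mul_apply,
        LinearMap.smul_apply, hv, map_smul, smul_smul] <;>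
      rw [sub_eq_zero] <;> match_scalars <;> norm_num
  exact sub_eq_zero.mp (LinearMap.ker_eq_top.mp (top_le_iff.mp key))

private lemma cube1_of_sup3 (f : Module.End K W)
    (h : Module.End.eigenspace f (-1 : K) ⊔ Module.End.eigenspace f 0 ⊔
      Module.End.eigenspace f 1 = ⊤) :
    ∀ v, f (f (f v)) = f v := by
  have key : ⊤ ≤ LinearMap.ker (f * f * f - f) := by
    rw [← h]
    refine sup_le (sup_le ?_ ?_) ?_ <;> intro v hv <;>
      rw [Module.End.mem_eigenspace_iff] at hv <;>
      simp only [LinearMap.mem_ker, LinearMap.sub_apply, Module.End.mul_apply,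
        LinearMap.smul_apply, hv, map_smul, smul_smul] <;>
      rw [sub_eq_zero] <;> match_scalars <;> norm_num
  have h0 : f * f * f - f = 0 := LinearMap.ker_eq_top.mp (top_le_iff.mp key)
  intro v
  have := DFunLike.congr_fun (sub_eq_zero.mp h0) v
  simpa [Module.End.mul_apply] using this


private lemma tool {K : Type*} [Field K] {V : Type*} [AddCommGroup V] [Module K V]
    [FiniteDimensional K V]
    (Ω : LinearMap.BilinForm K V) (hndflip : Ω.flip.Nondegenerate)
    {n : ℕ} (u c : Fin n → V) (hu : LinearIndependent K u)
    (h : ∀ w, ∑ i, Ω (u i) w • c i = 0) : ∀ j, c j = 0 := by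
  intro j
  obtain ⟨g, hg⟩ := LinearMap.exists_extend ((Module.Basis.span hu).coord j)
  set w := (Ω.flip.toDual hndflip).symm g with hw
  have hΩw : ∀ v, Ω v w = g v := by
    intro v
    have h2 := LinearMap.BilinForm.apply_toDual_symm_apply (B := Ω.flip) (hB := hndflip) g v
    exact h2
  have hgu : ∀ i, g (u i) = if i = j then 1 else 0 := by
    intro i
    have h3 : g ((Submodule.span K (Set.range u)).subtype ((Module.Basis.span hu) i))
        = (Module.Basis.span hu).coord j ((Module.Basis.span hu) i) := by
      rw [← hg]; rfl
    rw [Submodule.subtype_apply, Module.Basis.coord_apply, Module.Basis.repr_self,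
      Finsupp.single_apply, Module.Basis.span_apply] at h3
    exact h3
  have h4 := h w
  simp only [hΩw, hgu, ite_smul, one_smul, zero_smul] at h4
  rw [Finset.sum_ite_eq' Finset.univ j c] at h4
  simpa using h4

end Helpers

theorem forward_part
    (K : Type*) [Field K] [CharZero K]
    (V : Type*) [AddCommGroup V] [Module K V] [FiniteDimensional K V] :
    (∀ X : Module.End K V,
      Module.End.eigenspace X (-(1 : K)/2) ⊔ Module.End.eigenspace X 0 ⊔
          Module.End.eigenspace X (1/2) = ⊤ →
      Module.End.eigenspace (LinearMap.mulLeft K X - LinearMap.mulRight K X) (-1) ⊔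
        Module.End.eigenspace (LinearMap.mulLeft K X - LinearMap.mulRight K X)
          (-(1 : K)/2) ⊔
        Module.End.eigenspace (LinearMap.mulLeft K X - LinearMap.mulRight K X) 0 ⊔
        Module.End.eigenspace (LinearMap.mulLeft K X - LinearMap.mulRight K X) (1/2) ⊔
        Module.End.eigenspace (LinearMap.mulLeft K X - LinearMap.mulRight K X) 1 = ⊤) := by
  intro X hX
  have hX3 : X * X * X = (1/4:K) • X := cube_of_sup3 X hX
  set L : Module.End K (Module.End K V) := LinearMap.mulLeft K X with hLdef
  set R : Module.End K (Module.End K V) := LinearMap.mulRight K X with hRdef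
  set A : Module.End K (Module.End K V) := L - R with hAdef
  set S5 := Module.End.eigenspace A (-1) ⊔ Module.End.eigenspace A (-(1 : K)/2) ⊔
      Module.End.eigenspace A 0 ⊔ Module.End.eigenspace A (1/2) ⊔
      Module.End.eigenspace A 1 with hS5
  have hLc : ∀ Y, L (L (L Y)) = (1/4:K) • L Y := by
    intro Y
    simp only [hLdef, LinearMap.mulLeft_apply]
    rw [show X * (X * (X * Y)) = (X * X * X) * Y by noncomm_ring, hX3, smul_mul_assoc]
  have hRc : ∀ Y, R (R (R Y)) = (1/4:K) • R Y := by
    intro Y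
    simp only [hRdef, LinearMap.mulRight_apply]
    rw [show Y * X * X * X = Y * (X * X * X) by noncomm_ring, hX3, mul_smul_comm]
  have hcomm : ∀ Y, L (R Y) = R (L Y) := by
    intro Y
    simp only [hLdef, hRdef, LinearMap.mulLeft_apply, LinearMap.mulRight_apply, mul_assoc]
  -- the five inclusions
  have e1 : Module.End.eigenspace A (-1 : K) ≤ S5 := by
    rw [hS5]; exact le_sup_of_le_left (le_sup_of_le_left (le_sup_of_le_left
      (le_sup_of_le_left le_rfl)))
  have e2 : Module.End.eigenspace A (-(1:K)/2) ≤ S5 := by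
    rw [hS5]; exact le_sup_of_le_left (le_sup_of_le_left (le_sup_of_le_left le_sup_right))
  have e3 : Module.End.eigenspace A (0 : K) ≤ S5 := by
    rw [hS5]; exact le_sup_of_le_left (le_sup_of_le_left le_sup_right)
  have e4 : Module.End.eigenspace A ((1:K)/2) ≤ S5 := by
    rw [hS5]; exact le_sup_of_le_left le_sup_right
  have e5 : Module.End.eigenspace A (1 : K) ≤ S5 := le_sup_right
  have main : ∀ (c d : K), (c = -(1:K)/2 ∨ c = 0 ∨ c = 1/2) →
      (d = -(1:K)/2 ∨ d = 0 ∨ d = 1/2) → ∀ Z, Z ∈ Module.End.eigenspace L c →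
      Z ∈ Module.End.eigenspace R d → Z ∈ S5 := by
    intro c d hc hd Z h1 h2
    have hZ : Z ∈ Module.End.eigenspace A (c - d) := by
      rw [Module.End.mem_eigenspace_iff] at h1 h2 ⊢
      rw [hAdef, LinearMap.sub_apply, h1, h2, sub_smul]
    rcases hc with rfl | rfl | rfl <;> rcases hd with rfl | rfl | rfl
    · rw [show (-(1:K)/2 - -(1:K)/2 : K) = 0 by norm_num] at hZ; exact e3 hZ
    · rw [show (-(1:K)/2 - 0 : K) = -(1:K)/2 by norm_num] at hZ; exact e2 hZ
    · rw [show (-(1:K)/2 - 1/2 : K) = -1 by norm_num] at hZ; exact e1 hZ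
    · rw [show ((0:K) - -(1:K)/2 : K) = 1/2 by norm_num] at hZ; exact e4 hZ
    · rw [show ((0:K) - 0 : K) = 0 by norm_num] at hZ; exact e3 hZ
    · rw [show ((0:K) - 1/2 : K) = -(1:K)/2 by norm_num] at hZ; exact e2 hZ
    · rw [show ((1:K)/2 - -(1:K)/2 : K) = 1 by norm_num] at hZ; exact e5 hZ
    · rw [show ((1:K)/2 - 0 : K) = 1/2 by norm_num] at hZ; exact e4 hZ
    · rw [show ((1:K)/2 - 1/2 : K) = 0 by norm_num] at hZ; exact e3 hZ
  have decompR : ∀ (c : K), (c = -(1:K)/2 ∨ c = 0 ∨ c = 1/2) →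
      ∀ Z, Z ∈ Module.End.eigenspace L c → Z ∈ S5 := by
    intro c hc Z hZ
    obtain ⟨g1, g2, g3, gsum⟩ := eig_mem_of_cube R hRc Z
    have hinv : ∀ W, W ∈ Module.End.eigenspace L c → R W ∈ Module.End.eigenspace L c := by
      intro W hW
      rw [Module.End.mem_eigenspace_iff] at hW ⊢
      rw [hcomm W, hW, map_smul]
    have hRZ := hinv _ hZ
    have hRRZ := hinv _ hRZ
    have m1 : ((2:K) • R (R Z) - R Z) ∈ Module.End.eigenspace L c :=
      Submodule.sub_mem _ (Submodule.smul_mem _ _ hRRZ) hRZ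
    have m2 : (Z - (4:K) • R (R Z)) ∈ Module.End.eigenspace L c :=
      Submodule.sub_mem _ hZ (Submodule.smul_mem _ _ hRRZ)
    have m3 : ((2:K) • R (R Z) + R Z) ∈ Module.End.eigenspace L c :=
      Submodule.add_mem _ (Submodule.smul_mem _ _ hRRZ) hRZ
    rw [gsum]
    exact Submodule.add_mem _ (Submodule.add_mem _
      (main c (-(1:K)/2) hc (Or.inl rfl) _ m1 g1)
      (main c 0 hc (Or.inr (Or.inl rfl)) _ m2 g2))
      (main c (1/2) hc (Or.inr (Or.inr rfl)) _ m3 g3)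
  rw [eq_top_iff]
  intro Y _
  obtain ⟨f1, f2, f3, fsum⟩ := eig_mem_of_cube L hLc Y
  rw [fsum]
  exact Submodule.add_mem _ (Submodule.add_mem _
    (decompR (-(1:K)/2) (Or.inl rfl) _ f1)
    (decompR 0 (Or.inr (Or.inl rfl)) _ f2))
    (decompR (1/2) (Or.inr (Or.inr rfl)) _ f3)

theorem converse_part
    (K : Type*) [Field K] [CharZero K]
    (V : Type*) [AddCommGroup V] [Module K V] [FiniteDimensional K V] :
    (∀ (Ω : LinearMap.BilinForm K V),
      (∀ v : V, Ω v v = 0) → (∀ v : V, (∀ w : V, Ω v w = 0) → v = 0) →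
      ∀ (X : Module.End K V) (hX : X ∈ skewAdjointLieSubalgebra Ω), X ≠ 0 →
      (Module.End.eigenspace
          ((LieAlgebra.ad K ↥(skewAdjointLieSubalgebra Ω) ⟨X, hX⟩ :
            Module.End K ↥(skewAdjointLieSubalgebra Ω))) (-1) ⊔
        Module.End.eigenspace
          ((LieAlgebra.ad K ↥(skewAdjointLieSubalgebra Ω) ⟨X, hX⟩ :
            Module.End K ↥(skewAdjointLieSubalgebra Ω))) 0 ⊔
        Module.End.eigenspace
          ((LieAlgebra.ad K ↥(skewAdjointLieSubalgebra Ω) ⟨X, hX⟩ :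
            Module.End K ↥(skewAdjointLieSubalgebra Ω))) 1 = ⊤) →
      Module.End.eigenspace X (-(1 : K)/2) ⊔ Module.End.eigenspace X (1/2) = ⊤) := by
  intro Ω hAlt hNd X hX hX0 hSup
  have hnd : Ω.Nondegenerate :=
    (LinearMap.IsRefl.nondegenerate_iff_separatingLeft (LinearMap.IsAlt.isRefl (B := Ω) hAlt)).mpr hNd
  have hndflip : Ω.flip.Nondegenerate := hnd.flip
  have getw : ∀ a : V, a ≠ 0 → ∃ w, Ω a w ≠ 0 := by
    intro a ha
    by_contra h
    push_neg at h
    exact ha (hNd a h)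
  have hskw : ∀ u v : V, Ω u v = - Ω v u := by
    intro u v
    have h1 := hAlt (u + v)
    simp only [map_add, LinearMap.add_apply] at h1
    rw [hAlt u, hAlt v] at h1
    linear_combination h1
  have hXsk : ∀ u v : V, Ω (X u) v = - Ω u (X v) := by
    have h := (LinearMap.mem_skewAdjointSubmodule X).mp hX
    intro u v
    simpa using h u v
  have hT3 := cube1_of_sup3 _ hSup
  have hdag : ∀ (Y : Module.End K V), Y ∈ skewAdjointLieSubalgebra Ω →
      ⁅X, ⁅X, ⁅X, Y⁆⁆⁆ = ⁅X, Y⁆ := by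
    intro Y hY
    have h1 := hT3 ⟨Y, hY⟩
    simp only [LieAlgebra.ad_apply] at h1
    have h2 := congrArg Subtype.val h1
    simpa only [LieSubalgebra.coe_bracket] using h2
  set S : V → V → Module.End K V := fun a b => (Ω a).smulRight b + (Ω b).smulRight a
    with hSdef
  have hSapp : ∀ a b w, S a b w = Ω a w • b + Ω b w • a := by
    intro a b w; simp [hSdef]
  have hSmem : ∀ a b, S a b ∈ skewAdjointLieSubalgebra Ω := by
    intro a b
    have : S a b ∈ Ω.skewAdjointSubmodule := by
      refine (LinearMap.mem_skewAdjointSubmodule _).mpr ?_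
      intro u v
      simp only [hSdef, LinearMap.add_apply, LinearMap.coe_smulRight, LinearMap.neg_apply, Pi.neg_apply,
        map_add, map_smul, map_neg, smul_eq_mul, LinearMap.smul_apply]
      rw [hskw u b, hskw u a]
      ring
    exact this
  have hbrk : ∀ a b, ⁅X, S a b⁆ = S (X a) b + S a (X b) := by
    intro a b
    ext w
    have e1 : Ω a (X w) = - Ω (X a) w := by rw [hXsk a w, neg_neg]
    have e2 : Ω b (X w) = - Ω (X b) w := by rw [hXsk b w, neg_neg]
    simp only [Ring.lie_def, LinearMap.sub_apply, Module.End.mul_apply, LinearMap.add_apply,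
      hSapp, map_add, map_smul, e1, e2]
    module
  have hla : ∀ Y Z : Module.End K V, ⁅X, Y + Z⁆ = ⁅X, Y⁆ + ⁅X, Z⁆ := by
    intro Y Z
    simp only [Ring.lie_def]
    noncomm_ring
  have hE1 : ∀ (a w : V),
      Ω a w • (X (X (X a))) + (3:K) • (Ω (X a) w • (X (X a)))
        + (3:K) • (Ω (X (X a)) w • (X a)) + Ω (X (X (X a))) w • a
      = Ω a w • X a + Ω (X a) w • a := by
    intro a w
    have h1 := hdag (S a a) (hSmem a a)
    simp only [hbrk, hla] at h1
    have h2 := congrArg (fun (F : Module.End K V) => F w) h1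
    simp only [LinearMap.add_apply, hSapp] at h2
    linear_combination (norm := module) ((1:K)/2) • h2
  have hE2 : ∀ (a b w : V), X b = 0 →
      Ω b w • (X (X (X a))) + Ω (X (X (X a))) w • b
      = Ω b w • X a + Ω (X a) w • b := by
    intro a b w hb
    have h1 := hdag (S a b) (hSmem a b)
    simp only [hbrk, hla] at h1
    rw [hb] at h1
    simp only [map_zero] at h1
    have hS0 : ∀ u : V, S u 0 = 0 := by
      intro u; ext z; simp [hSapp]
    have hS0' : ∀ u : V, S 0 u = 0 := by
      intro u; ext z; simp [hSapp]
    simp only [hS0, hS0', add_zero, zero_add] at h1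
    have h2 := congrArg (fun (F : Module.End K V) => F w) h1
    simp only [LinearMap.add_apply, LinearMap.zero_apply, hSapp] at h2
    linear_combination (norm := module) h2
  -- main case analysis
  by_cases hker : ∃ b, b ≠ 0 ∧ X b = 0
  · exfalso
    obtain ⟨b, hb0, hbX⟩ := hker
    have h3X : ∀ a, X (X (X a)) = X a := by
      intro a
      set c := X (X (X a)) - X a with hc
      have hrel : ∀ w, Ω b w • c + Ω c w • b = 0 := by
        intro w
        have h2 := hE2 a b w hbX
        simp only [hc, map_sub, LinearMap.sub_apply]
        linear_combination (norm := module) h2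
      obtain ⟨w0, hw0⟩ := getw b hb0
      have h6 : Ω b w0 • c = (-(Ω c w0)) • b := by
        linear_combination (norm := module) hrel w0
      have h7 : c = ((Ω b w0)⁻¹ * (-(Ω c w0))) • b := by
        rw [mul_smul, ← h6, inv_smul_smul₀ hw0]
      set μ := (Ω b w0)⁻¹ * (-(Ω c w0)) with hμdef
      have h8 := hrel w0
      rw [h7] at h8
      simp only [map_smul, LinearMap.smul_apply, smul_smul, smul_eq_mul] at h8
      have h9 : (Ω b w0 * μ + μ * Ω b w0) • b = 0 := by
        linear_combination (norm := module) h8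
      have h10 : Ω b w0 * μ + μ * Ω b w0 = 0 := by
        by_contra hne
        exact hb0 ((smul_eq_zero.mp h9).resolve_left hne)
      have hμ : μ = 0 := by
        have h11 : (2 * Ω b w0) * μ = 0 := by linear_combination h10
        rcases mul_eq_zero.mp h11 with h | h
        · rcases mul_eq_zero.mp h with h' | h'
          · exact absurd h' two_ne_zero
          · exact absurd h' hw0
        · exact h
      rw [hμ, zero_smul] at h7
      have h12 : X (X (X a)) - X a = 0 := by rw [← hc]; exact h7
      exact sub_eq_zero.mp h12
    have heig1 : ∀ a : V, X a = a → a = 0 := by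
      intro a ha
      by_contra ha0
      obtain ⟨w0, hw0⟩ := getw a ha0
      have k1 : X (X a) = a := by rw [ha, ha]
      have k2 : X (X (X a)) = a := by rw [ha, ha, ha]
      have h3 := hE1 a w0
      rw [k2, k1, ha] at h3
      have h4 : ((6:K) * Ω a w0) • a = 0 := by linear_combination (norm := module) h3
      rcases smul_eq_zero.mp h4 with h5 | h5
      · rcases mul_eq_zero.mp h5 with h6 | h6
        · exact absurd h6 (by norm_num)
        · exact hw0 h6
      · exact ha0 h5
    have heigm1 : ∀ a : V, X a = -a → a = 0 := by
      intro a ha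
      by_contra ha0
      obtain ⟨w0, hw0⟩ := getw a ha0
      have k1 : X (X a) = a := by rw [ha, map_neg, ha, neg_neg]
      have k2 : X (X (X a)) = -a := by rw [k1, ha]
      have h3 := hE1 a w0
      rw [k2, k1, ha] at h3
      have h4 : ((6:K) * Ω a w0) • a = 0 := by
        simp only [map_neg, LinearMap.neg_apply] at h3
        linear_combination (norm := module) (-1 : K) • h3
      rcases smul_eq_zero.mp h4 with h5 | h5
      · rcases mul_eq_zero.mp h5 with h6 | h6
        · exact absurd h6 (by norm_num)
        · exact hw0 h6
      · exact ha0 h5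
    refine hX0 ?_
    ext a
    have hp : X ((X (X a)) + X a) = (X (X a)) + X a := by
      rw [map_add, h3X]
      abel
    have hm : X ((X (X a)) - X a) = -((X (X a)) - X a) := by
      rw [map_sub, h3X]
      abel
    have hp0 := heig1 _ hp
    have hm0 := heigm1 _ hm
    have h2 : (2:K) • X a = 0 := by
      linear_combination (norm := module) hp0 - hm0
    have h3 : X a = 0 := by
      rcases smul_eq_zero.mp h2 with h | h
      · exact absurd h two_ne_zero
      · exact h
    simpa using h3
  · push_neg at hker
    have hker' : ∀ b : V, X b = 0 → b = 0 := by
      intro b hb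
      by_contra h0
      exact hker b h0 hb
    have hX2 : ∀ a, X (X a) = ((1:K)/4) • a := by
      intro a
      by_cases ha0 : a = 0
      · rw [ha0]; simp
      by_cases hlin : ∃ lam : K, X a = lam • a
      · obtain ⟨lam, hlam⟩ := hlin
        have hlam0 : lam ≠ 0 := by
          rintro rfl
          rw [zero_smul] at hlam
          exact ha0 (hker' a hlam)
        obtain ⟨w0, hw0⟩ := getw a ha0
        have k1 : X (X a) = (lam*lam) • a := by rw [hlam, map_smul, hlam, smul_smul]
        have k2 : X (X (X a)) = ((lam*lam)*lam) • a := by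
          rw [k1, map_smul, hlam, smul_smul]
        have h3 := hE1 a w0
        rw [k2, k1, hlam] at h3
        simp only [map_smul, LinearMap.smul_apply, smul_smul, smul_eq_mul] at h3
        have h4 : ((8*(lam*lam*lam) - 2*lam) * Ω a w0) • a = 0 := by
          linear_combination (norm := module) h3
        have h5 : 8*(lam*lam*lam) - 2*lam = 0 := by
          rcases smul_eq_zero.mp h4 with h | h
          · rcases mul_eq_zero.mp h with h' | h'
            · exact h'
            · exact absurd h' hw0
          · exact absurd h ha0
        have hlam2 : lam * lam = 1/4 := by
          have h6 : (2*lam) * (4*(lam*lam) - 1) = 0 := by linear_combination h5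
          rcases mul_eq_zero.mp h6 with h | h
          · rcases mul_eq_zero.mp h with h' | h'
            · exact absurd h' two_ne_zero
            · exact absurd h' hlam0
          · linear_combination h/4
        rw [k1, hlam2]
      · push_neg at hlin
        have hXa0 : X a ≠ 0 := hker a ha0
        have hind2 : LinearIndependent K ![a, X a] := by
          rw [linearIndependent_fin2]
          refine ⟨by simpa using hXa0, ?_⟩
          intro c hcon
          simp only [Matrix.cons_val_one, Matrix.head_cons, Matrix.cons_val_zero] at hcon
          have hc0 : c ≠ 0 := by
            rintro rfl
            rw [zero_smul] at hcon
            exact ha0 hcon.symm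
          have h8 : c⁻¹ • (c • X a) = c⁻¹ • a := by rw [hcon]
          rw [smul_smul, inv_mul_cancel₀ hc0, one_smul] at h8
          exact hlin c⁻¹ h8
        have hrange2 : Set.range ![a, X a] = {a, X a} := by
          simp [Matrix.range_cons, Matrix.range_empty, Set.pair_comm]
        by_cases hmem : X (X a) ∈ Submodule.span K {a, X a}
        · obtain ⟨α, β, hab⟩ := Submodule.mem_span_pair.mp hmem
          have h3a : X (X (X a)) = (β*α) • a + (α + β*β) • X a := by
            calc X (X (X a)) = X (α • a + β • X a) := by rw [hab]
            _ = α • X a + β • X (X a) := by rw [map_add, map_smul, map_smul]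
            _ = α • X a + β • (α • a + β • X a) := by rw [hab]
            _ = (β*α) • a + (α + β*β) • X a := by module
          have hrel : ∀ w, Ω a w • ((2*(α*β)) • a + (4*α + β*β - 1) • X a)
              + Ω (X a) w • ((4*α + β*β - 1) • a + (6*β) • X a) = 0 := by
            intro w
            have h3 := hE1 a w
            rw [h3a, ← hab] at h3
            simp only [map_add, map_smul, LinearMap.add_apply, LinearMap.smul_apply,
              smul_eq_mul] at h3
            linear_combination (norm := module) h3
          have hA := tool Ω hndflip ![a, X a]
            ![(2*(α*β)) • a + (4*α + β*β - 1) • X a, (4*α + β*β - 1) • a + (6*β) • X a]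
            hind2 (by
              intro w
              rw [Fin.sum_univ_two]
              simpa using hrel w)
          have hB := hA 1
          simp only [Matrix.cons_val_one, Matrix.head_cons] at hB
          have hco := Fintype.linearIndependent_iff.mp hind2 ![4*α + β*β - 1, 6*β] (by
            rw [Fin.sum_univ_two]
            simpa using hB)
          have hβ : (6:K)*β = 0 := by simpa using hco 1
          have hβ0 : β = 0 := by
            rcases mul_eq_zero.mp hβ with h | h
            · exact absurd h (by norm_num)
            · exact h
          have hα : 4*α + β*β - 1 = 0 := by simpa using hco 0
          have hα4 : α = 1/4 := by
            rw [hβ0] at hα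
            linear_combination hα/4
          rw [← hab, hβ0, hα4]
          module
        · have hind3 : LinearIndependent K ![X (X a), a, X a] :=
            linearIndependent_fin_cons.mpr ⟨hind2, by rwa [hrange2]⟩
          by_cases hmem3 : X (X (X a)) ∈ Submodule.span K (Set.range ![X (X a), a, X a])
          · obtain ⟨co, hco⟩ := (Submodule.mem_span_range_iff_exists_fun K).mp hmem3
            have h3a : X (X (X a)) = co 0 • X (X a) + co 1 • a + co 2 • X a := by
              rw [← hco, Fin.sum_univ_three]
              simp
            have hrel : ∀ w,
                Ω (X (X a)) w • ((3:K) • X a + co 0 • a)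
                + Ω a w • ((2*(co 1)) • a + (co 2 - 1) • X a + co 0 • X (X a))
                + Ω (X a) w • ((co 2 - 1) • a + (3:K) • X (X a)) = 0 := by
              intro w
              have h3 := hE1 a w
              rw [h3a] at h3
              simp only [map_add, map_smul, LinearMap.add_apply, LinearMap.smul_apply,
                smul_eq_mul] at h3
              linear_combination (norm := module) h3
            have hC := tool Ω hndflip ![X (X a), a, X a]
              ![(3:K) • X a + co 0 • a,
                (2*(co 1)) • a + (co 2 - 1) • X a + co 0 • X (X a),
                (co 2 - 1) • a + (3:K) • X (X a)]
              hind3 (by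
                intro w
                rw [Fin.sum_univ_three]
                simpa using hrel w) 0
            simp only [Matrix.cons_val_zero] at hC
            have hco2 := Fintype.linearIndependent_iff.mp hind2 ![co 0, 3] (by
              rw [Fin.sum_univ_two]
              simp only [Matrix.cons_val_zero, Matrix.cons_val_one, Matrix.head_cons]
              linear_combination (norm := module) hC)
            have h30 : (3:K) = 0 := by simpa using hco2 1
            exact absurd h30 (by norm_num)
          · have hind4 : LinearIndependent K ![X (X (X a)), X (X a), a, X a] :=
              linearIndependent_fin_cons.mpr ⟨hind3, hmem3⟩
            have hrel : ∀ w,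
                Ω (X (X (X a))) w • a
                + Ω (X (X a)) w • ((3:K) • X a)
                + Ω a w • (X (X (X a)) - X a)
                + Ω (X a) w • ((3:K) • X (X a) - a) = 0 := by
              intro w
              have h3 := hE1 a w
              linear_combination (norm := module) h3
            have hD := tool Ω hndflip ![X (X (X a)), X (X a), a, X a]
              ![a, (3:K) • X a, X (X (X a)) - X a, (3:K) • X (X a) - a]
              hind4 (by
                intro w
                rw [Fin.sum_univ_four]
                simpa using hrel w) 1
            simp only [Matrix.cons_val_one, Matrix.head_cons] at hD
            have hXa : X a = 0 := by
              rcases smul_eq_zero.mp hD with h | h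
              · exact absurd h (by norm_num)
              · exact h
            exact absurd (hker' a hXa) ha0
    rw [eq_top_iff]
    intro v _
    have hmm : ((1:K)/2) • v - X v ∈ Module.End.eigenspace X (-(1:K)/2) := by
      rw [Module.End.mem_eigenspace_iff, map_sub, map_smul, hX2]
      match_scalars <;> norm_num
    have hpp : ((1:K)/2) • v + X v ∈ Module.End.eigenspace X ((1:K)/2) := by
      rw [Module.End.mem_eigenspace_iff, map_add, map_smul, hX2]
      match_scalars <;> norm_num
    have hsum : v = (((1:K)/2) • v - X v) + (((1:K)/2) • v + X v) := by module
    rw [hsum]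
    exact Submodule.add_mem _ (Submodule.mem_sup_left hmm) (Submodule.mem_sup_right hpp)

/-- (Forward) If `X ∈ End(V)` is diagonalizable with eigenvalues in
`{-1/2, 0, 1/2}`, then `ad X = [X, ·]` on `End(V)` is diagonalizable with eigenvalues in
`{-1, -1/2, 0, 1/2, 1}`.  (Converse) If `X ∈ 𝔰𝔭(V, Ω)` is nonzero and `ad X` induces a
3-grading on `𝔰𝔭(V, Ω)` with eigenvalues `{-1, 0, 1}`, then `X` is diagonalizable on `V`
with eigenvalues `±1/2`. -/
theorem eigenvalue_halves_and_ad_three_grading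
    (K : Type*) [Field K] [CharZero K]
    (V : Type*) [AddCommGroup V] [Module K V] [FiniteDimensional K V] :
    (∀ X : Module.End K V,
      Module.End.eigenspace X (-(1 : K)/2) ⊔ Module.End.eigenspace X 0 ⊔
          Module.End.eigenspace X (1/2) = ⊤ →
      Module.End.eigenspace (LinearMap.mulLeft K X - LinearMap.mulRight K X) (-1) ⊔
        Module.End.eigenspace (LinearMap.mulLeft K X - LinearMap.mulRight K X)
          (-(1 : K)/2) ⊔
        Module.End.eigenspace (LinearMap.mulLeft K X - LinearMap.mulRight K X) 0 ⊔
        Module.End.eigenspace (LinearMap.mulLeft K X - LinearMap.mulRight K X) (1/2) ⊔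
        Module.End.eigenspace (LinearMap.mulLeft K X - LinearMap.mulRight K X) 1 = ⊤) ∧
    (∀ (Ω : LinearMap.BilinForm K V),
      (∀ v : V, Ω v v = 0) → (∀ v : V, (∀ w : V, Ω v w = 0) → v = 0) →
      ∀ (X : Module.End K V) (hX : X ∈ skewAdjointLieSubalgebra Ω), X ≠ 0 →
      (Module.End.eigenspace
          ((LieAlgebra.ad K ↥(skewAdjointLieSubalgebra Ω) ⟨X, hX⟩ :
            Module.End K ↥(skewAdjointLieSubalgebra Ω))) (-1) ⊔
        Module.End.eigenspace
          ((LieAlgebra.ad K ↥(skewAdjointLieSubalgebra Ω) ⟨X, hX⟩ :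
            Module.End K ↥(skewAdjointLieSubalgebra Ω))) 0 ⊔
        Module.End.eigenspace
          ((LieAlgebra.ad K ↥(skewAdjointLieSubalgebra Ω) ⟨X, hX⟩ :
            Module.End K ↥(skewAdjointLieSubalgebra Ω))) 1 = ⊤) →
      Module.End.eigenspace X (-(1 : K)/2) ⊔ Module.End.eigenspace X (1/2) = ⊤) := by
  exact ⟨forward_part K V, converse_part K V⟩
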